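/- The function f(x) = x·log x/(1−x)² + 1/(1−x) is strictly decreasing on (0,1), satisfies lim_{x→1⁻} f(x) = 1/2, and hence f(x) > 1/2 for every x ∈ (0,1). -/

import Mathlib

open Real Filter

private lemma aux_g_neg {x : ℝ} (hx : x ∈ Set.Ioo (0:ℝ) 1) :
    (1 + x) * Real.log x + 2 * (1 - x) < 0 := by
  have hmono : StrictMonoOn (fun x : ℝ => (1 + x) * Real.log x + 2 * (1 - x))
      (Set.Ioc (0:ℝ) 1) := by
    apply strictMonoOn_of_deriv_pos (convex_Ioc 0 1)
    · apply ContinuousOn.add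
      · exact (continuousOn_const.add continuousOn_id).mul
          (fun y hy => (Real.continuousAt_log (ne_of_gt hy.1)).continuousWithinAt)
      · fun_prop
    · intro y hy
      rw [interior_Ioc] at hy
      have hy0 : (0:ℝ) < y := hy.1
      have hy1 : y < 1 := hy.2
      have hd : HasDerivAt (fun x : ℝ => (1 + x) * Real.log x + 2 * (1 - x))
          (Real.log y + (1 + y) * y⁻¹ - 2) y := by
        have h1 : HasDerivAt (fun x : ℝ => (1 + x)) 1 y := by
          simpa using (hasDerivAt_id y).const_add (1:ℝ)
        have h2 : HasDerivAt Real.log y⁻¹ y := Real.hasDerivAt_log hy0.ne'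
        have h3 := h1.mul h2
        have h4 : HasDerivAt (fun x : ℝ => 2 * (1 - x)) (-2) y := by
          have : HasDerivAt (fun x : ℝ => (1 - x)) (-1) y := by
            simpa using (hasDerivAt_id y).const_sub (1:ℝ)
          simpa using this.const_mul (2:ℝ)
        have := h3.add h4
        refine this.congr_deriv ?_
        ring
      rw [hd.deriv]
      have hlog : -Real.log y < y⁻¹ - 1 := by
        have := Real.log_lt_sub_one_of_pos (inv_pos.mpr hy0) (by
          simp only [ne_eq, inv_eq_one]; exact hy1.ne)
        rwa [Real.log_inv] at this
      have hyinv : 1 < y⁻¹ := (one_lt_inv₀ hy0).mpr hy1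
      have : (1 + y) * y⁻¹ = y⁻¹ + 1 := by field_simp
      rw [this]
      linarith
  have h1 : (1:ℝ) ∈ Set.Ioc (0:ℝ) 1 := by norm_num
  have h2 : x ∈ Set.Ioc (0:ℝ) 1 := ⟨hx.1, hx.2.le⟩
  have := hmono h2 h1 hx.2
  simpa using this

private lemma aux_hasDerivAt {x : ℝ} (hx : x ∈ Set.Ioo (0:ℝ) 1) :
    HasDerivAt (fun x : ℝ => x * Real.log x / (1 - x) ^ 2 + 1 / (1 - x))
      (((1 + x) * Real.log x + 2 * (1 - x)) / (1 - x) ^ 3) x := by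
  have hx0 : (0:ℝ) < x := hx.1
  have hx1 : (1:ℝ) - x ≠ 0 := by have := hx.2; intro h; linarith [sub_eq_zero.mp h]
  have ha : HasDerivAt (fun x : ℝ => x * Real.log x) (Real.log x + 1) x := by
    have := (hasDerivAt_id x).mul (Real.hasDerivAt_log hx0.ne')
    refine this.congr_deriv ?_
    field_simp
    simp only [id_eq]; ring
  have hsub : HasDerivAt (fun x : ℝ => (1 - x)) (-1) x := by
    simpa using (hasDerivAt_id x).const_sub (1:ℝ)
  have hb : HasDerivAt (fun x : ℝ => (1 - x) ^ 2) (2 * (1 - x) * (-1)) x := by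
    have := hsub.pow 2
    refine this.congr_deriv ?_
    ring
  have hc := ha.div hb (pow_ne_zero 2 hx1)
  have hd : HasDerivAt (fun x : ℝ => 1 / (1 - x)) (1 / (1 - x) ^ 2) x := by
    have := hsub.inv hx1
    simp only [one_div]
    refine this.congr_deriv ?_
    field_simp
  have := hc.add hd
  refine this.congr_deriv ?_
  field_simp
  ring

theorem one_variable_function_properties :
    StrictAntiOn (fun x : ℝ => x * Real.log x / (1 - x) ^ 2 + 1 / (1 - x))
      (Set.Ioo (0 : ℝ) 1) ∧
    Tendsto (fun x : ℝ => x * Real.log x / (1 - x) ^ 2 + 1 / (1 - x))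
      (nhdsWithin 1 (Set.Iio 1)) (nhds (1 / 2)) ∧
    ∀ x ∈ Set.Ioo (0 : ℝ) 1,
      1 / 2 < x * Real.log x / (1 - x) ^ 2 + 1 / (1 - x) := by
  set f : ℝ → ℝ := fun x => x * Real.log x / (1 - x) ^ 2 + 1 / (1 - x) with hf
  have hanti : StrictAntiOn f (Set.Ioo (0:ℝ) 1) := by
    apply strictAntiOn_of_deriv_neg (convex_Ioo 0 1)
    · intro x hx
      exact (aux_hasDerivAt hx).differentiableAt.continuousAt.continuousWithinAt
    · intro x hx
      rw [interior_Ioo] at hx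
      rw [(aux_hasDerivAt hx).deriv]
      apply div_neg_of_neg_of_pos (aux_g_neg hx)
      have : (0:ℝ) < 1 - x := by linarith [hx.2]
      positivity
  have hlim : Tendsto f (nhdsWithin 1 (Set.Iio 1)) (nhds (1/2)) := by
    have hmem : Set.Ioo (1/2 : ℝ) 1 ∈ nhdsWithin (1:ℝ) (Set.Iio 1) :=
      Ioo_mem_nhdsLT_of_mem (by norm_num)
    have hslope : Tendsto (fun x : ℝ => Real.log x / (x - 1))
        (nhdsWithin 1 (Set.Iio 1)) (nhds 1) := by
      have h := hasDerivAt_iff_tendsto_slope.mp (Real.hasDerivAt_log one_ne_zero)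
      rw [inv_one] at h
      have h2 := h.mono_left (nhdsWithin_mono (1:ℝ) (fun y hy => ne_of_lt hy))
      apply h2.congr
      intro y
      simp [slope_def_field, Real.log_one]
    have hkey : Tendsto (fun x : ℝ => (x * Real.log x + (1 - x)) / (1 - x) ^ 2)
        (nhdsWithin 1 (Set.Iio 1)) (nhds (1/2)) := by
      apply HasDerivAt.lhopital_zero_nhdsLT
        (f' := fun x : ℝ => Real.log x) (g' := fun x : ℝ => 2 * (1 - x) * (-1))
      · filter_upwards [hmem] with y hy
        have hy0 : (0:ℝ) < y := by linarith [hy.1]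
        have ha : HasDerivAt (fun x : ℝ => x * Real.log x) (Real.log y + 1) y := by
          have := (hasDerivAt_id y).mul (Real.hasDerivAt_log hy0.ne')
          refine this.congr_deriv ?_
          field_simp
          simp only [id_eq]; ring
        have hsub : HasDerivAt (fun x : ℝ => (1 - x)) (-1) y := by
          simpa using (hasDerivAt_id y).const_sub (1:ℝ)
        have := ha.add hsub
        refine this.congr_deriv ?_
        ring
      · filter_upwards [hmem] with y hy
        have hsub : HasDerivAt (fun x : ℝ => (1 - x)) (-1) y := by
          simpa using (hasDerivAt_id y).const_sub (1:ℝ)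
        have := hsub.pow 2
        refine this.congr_deriv ?_
        ring
      · filter_upwards [hmem] with y hy
        have : (0:ℝ) < 1 - y := by linarith [hy.2]
        intro h
        nlinarith
      · have hc : ContinuousAt (fun x : ℝ => x * Real.log x + (1 - x)) 1 := by
          have : ContinuousAt Real.log 1 := Real.continuousAt_log one_ne_zero
          fun_prop (disch := norm_num)
        have h0 : Tendsto (fun x : ℝ => x * Real.log x + (1 - x)) (nhds 1) (nhds 0) := by
          have := hc.tendsto; simpa using this
        exact h0.mono_left nhdsWithin_le_nhds
      · have hc : ContinuousAt (fun x : ℝ => (1 - x) ^ 2) 1 := by fun_prop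
        have h0 : Tendsto (fun x : ℝ => (1 - x) ^ 2) (nhds 1) (nhds 0) := by
          have := hc.tendsto; simpa using this
        exact h0.mono_left nhdsWithin_le_nhds
      · have := hslope.div_const 2
        norm_num at this
        apply this.congr
        intro y
        rw [div_div]
        congr 1
        ring
    apply hkey.congr'
    filter_upwards [self_mem_nhdsWithin] with y hy
    have hy1 : (1:ℝ) - y ≠ 0 := by
      have : y < 1 := hy
      intro h; linarith [sub_eq_zero.mp h]
    show (y * Real.log y + (1 - y)) / (1 - y) ^ 2 = y * Real.log y / (1 - y) ^ 2 + 1 / (1 - y)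
    rw [add_div]
    congr 1
    rw [sq, div_mul_eq_div_div, div_self hy1]
  refine ⟨hanti, hlim, ?_⟩
  intro x hx
  set y := (x + 1) / 2 with hy
  have hxy : x < y := by rw [hy]; linarith [hx.2]
  have hy1 : y ∈ Set.Ioo (0:ℝ) 1 := by
    rw [hy]; constructor <;> [linarith [hx.1]; linarith [hx.2]]
  have h1 : f y < f x := hanti hx hy1 hxy
  have h2 : (1:ℝ)/2 ≤ f y := by
    apply le_of_tendsto hlim
    filter_upwards [Ioo_mem_nhdsLT_of_mem
      (show (1:ℝ) ∈ Set.Ioc y 2 by exact ⟨hy1.2, by norm_num⟩), self_mem_nhdsWithin]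
      with z hz hz1
    have hz2 : z ∈ Set.Ioo (0:ℝ) 1 := ⟨lt_trans hy1.1 hz.1, hz1⟩
    exact (hanti hy1 hz2 hz.1).le
  exact lt_of_le_of_lt h2 h1
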